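/- Let μ be a signed moment measure on ℝ^d which has a density w with respect to Lebesgue measure such that for each r > 0 the function θ ↦ w(rθ) belongs to L²(S^{d-1}). If all Laplace–Fourier coefficients w_{k,l}(r) := ∫_{S^{d-1}} w(rθ) Y_{k,l}(θ) dθ are non-negative, then μ is pseudo-positive, its component measures are given by dμ_{k,l}(r) = r^{k+d-1} w_{k,l}(r) dr, and ∫_0^∞ r^{-k} dμ_{k,l}(r) = ∫_0^∞ w_{k,l}(r) r^{d-1} dr whenever the latter integral exists. -/

import Mathlib

open MeasureTheory MvPolynomial Metric
open scoped ComplexOrder ENNReal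

noncomputable section

/-- `d`-dimensional Euclidean space. -/
abbrev E (d : ℕ) := EuclideanSpace ℝ (Fin d)

/-- The (surface) measure `dθ` on the unit sphere `S^{d-1}`. -/
noncomputable def sphMeas (d : ℕ) : Measure (sphere (0 : E d) 1) :=
  (volume : Measure (E d)).toSphere

/-- A bundled orthonormal basis `Y_{k,l}`, `l = 1,…,a_k`, of the spaces `H_k(ℝ^d)` of
real-valued harmonic polynomials homogeneous of degree `k`, orthonormal with respect to
`⟨f,g⟩ = ∫_{S^{d-1}} f g dθ`. -/
structure HarmonicBasis (d : ℕ) where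
  a : ℕ → ℕ
  Y : (k : ℕ) → Fin (a k) → MvPolynomial (Fin d) ℝ
  harmonic : ∀ k l, (∑ i, pderiv i (pderiv i (Y k l))) = 0
  homogeneous : ∀ k l, (Y k l).IsHomogeneous k
  orthonormal : ∀ (k k' : ℕ) (l : Fin (a k)) (l' : Fin (a k')),
    (∫ θ : sphere (0 : E d) 1,
        (eval (fun i => (θ : E d) i) (Y k l)) * (eval (fun i => (θ : E d) i) (Y k' l'))
      ∂(sphMeas d)) = if k = k' ∧ (l : ℕ) = (l' : ℕ) then 1 else 0
  complete : ∀ (k : ℕ) (P : MvPolynomial (Fin d) ℝ),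
    (∑ i, pderiv i (pderiv i P)) = 0 → P.IsHomogeneous k →
      P ∈ Submodule.span ℝ (Set.range (Y k))

/-- Evaluation of a complex polynomial in `d` variables at a point of `ℝ^d`. -/
def evalC {d : ℕ} (P : MvPolynomial (Fin d) ℂ) (x : E d) : ℂ :=
  eval (fun i => (x i : ℂ)) P

/-- The polynomial `|x|² = x₁² + … + x_d²`. -/
def normSqP (d : ℕ) : MvPolynomial (Fin d) ℂ := ∑ i, X i ^ 2

/-- Integral of a (complex- or real-valued) function with respect to a signed measure,
via the Jordan decomposition. -/
noncomputable def sInt {α : Type*} {G : Type*} [MeasurableSpace α] [NormedAddCommGroup G]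
    [NormedSpace ℝ G] (μ : SignedMeasure α) (f : α → G) : G :=
  (∫ x, f x ∂μ.toJordanDecomposition.posPart) - ∫ x, f x ∂μ.toJordanDecomposition.negPart

/-- A signed measure is a moment measure if every polynomial is integrable with respect to
its total variation. -/
def IsMomentMeasure {d : ℕ} (μ : SignedMeasure (E d)) : Prop :=
  ∀ P : MvPolynomial (Fin d) ℂ, Integrable (evalC P) μ.totalVariation

namespace HarmonicBasis

variable {d : ℕ} (B : HarmonicBasis d)

/-- `Y_{k,l}` as a function on `ℝ^d`. -/
def Yf (k : ℕ) (l : Fin (B.a k)) (x : E d) : ℝ := eval (fun i => x i) (B.Y k l)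

/-- `Y_{k,l}` as a complex polynomial. -/
def YC (k : ℕ) (l : Fin (B.a k)) : MvPolynomial (Fin d) ℂ :=
  (B.Y k l).map (algebraMap ℝ ℂ)

/-- The Laplace–Fourier coefficient `f_{k,l}(r) = ∫_{S^{d-1}} f(rθ) Y_{k,l}(θ) dθ`. -/
noncomputable def lfCoeff (f : E d → ℂ) (k : ℕ) (l : Fin (B.a k)) (r : ℝ) : ℂ :=
  ∫ θ : sphere (0 : E d) 1, f (r • (θ : E d)) * (B.Yf k l (θ : E d) : ℂ) ∂(sphMeas d)

/-- `GaussDecomp B f K p` : `p` is a Gauss (Laplace–Fourier) decomposition of the polynomial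
`f`, i.e. `f(x) = ∑_{k=0}^{K} ∑_{l=1}^{a_k} p_{k,l}(|x|²) Y_{k,l}(x)` with `p_{k,l} = 0` for
`k > K`. -/
def GaussDecomp (f : MvPolynomial (Fin d) ℂ) (K : ℕ)
    (p : (k : ℕ) → Fin (B.a k) → Polynomial ℂ) : Prop :=
  (∀ k, K < k → ∀ l, p k l = 0) ∧
    f = ∑ k ∈ Finset.range (K + 1), ∑ l,
      Polynomial.aeval (normSqP d) (p k l) * B.YC k l

/-- The component functional `T_{k,l}(p) = T(p(|x|²) Y_{k,l}(x))`. -/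
def component (T : MvPolynomial (Fin d) ℂ → ℂ) (k : ℕ) (l : Fin (B.a k))
    (p : Polynomial ℂ) : ℂ :=
  T (Polynomial.aeval (normSqP d) p * B.YC k l)

/-- A functional `T` on `ℂ[x₁,…,x_d]` is pseudo-positive definite (w.r.t. the basis `Y_{k,l}`)
if `T_{k,l}(p* p) ≥ 0` and `T_{k,l}(t · p*(t) p(t)) ≥ 0` for all univariate `p` and all `k, l`. -/
def PPD (T : MvPolynomial (Fin d) ℂ → ℂ) : Prop :=
  ∀ (k : ℕ) (l : Fin (B.a k)) (p : Polynomial ℂ),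
    0 ≤ B.component T k l (p.map (starRingEnd ℂ) * p) ∧
    0 ≤ B.component T k l (Polynomial.X * (p.map (starRingEnd ℂ) * p))

/-- A signed measure `μ` on `ℝ^d` is pseudo-positive (w.r.t. the basis `Y_{k,l}`) if
`∫ h(|x|) Y_{k,l}(x) dμ ≥ 0` for every non-negative continuous compactly supported `h`. -/
def PseudoPositive (μ : SignedMeasure (E d)) : Prop :=
  ∀ (k : ℕ) (l : Fin (B.a k)) (h : ℝ → ℝ), Continuous h → HasCompactSupport h →
    (∀ t, 0 ≤ h t) → 0 ≤ sInt μ (fun x => h ‖x‖ * B.Yf k l x)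

/-- `ν` is the family of component measures `μ_{k,l}` of the signed measure `μ`, i.e.
`∫_0^∞ h dμ_{k,l} = ∫_{ℝ^d} h(|x|) Y_{k,l}(x) dμ` for all continuous compactly supported `h`. -/
def IsComponentFamily (μ : SignedMeasure (E d))
    (ν : (k : ℕ) → Fin (B.a k) → Measure ℝ) : Prop :=
  ∀ k l, (ν k l) (Set.Iio 0) = 0 ∧
    ∀ h : ℝ → ℝ, Continuous h → HasCompactSupport h →
      ∫ t, h t ∂(ν k l) = sInt μ (fun x => h ‖x‖ * B.Yf k l x)

/-- The summability condition `C_N = ∑_{k,l} ∫_0^∞ r^N r^{-k} dσ_{k,l}(r) < ∞` for all `N`. -/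
def SummCond (σ : (k : ℕ) → Fin (B.a k) → Measure ℝ) : Prop :=
  ∀ N : ℕ, (∑' k : ℕ, ∑ l, ∫⁻ r, (ENNReal.ofReal r) ^ N * ((ENNReal.ofReal r) ^ k)⁻¹
    ∂(σ k l)) < ⊤

end HarmonicBasis

/-- The set `W_τ^{Sti}` of all non-negative moment measures on `[0,∞)` having the same
moments as `τ`. -/
def WSti (τ : Measure ℝ) : Set (Measure ℝ) :=
  {ρ | ρ (Set.Iio 0) = 0 ∧ (∀ m : ℕ, Integrable (fun t => t ^ m) ρ) ∧
    ∀ m : ℕ, ∫ t, t ^ m ∂ρ = ∫ t, t ^ m ∂τ}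

/-- A measure `ν` on `[0,∞)` is determined in the sense of Stieltjes if it is the only
non-negative measure on `[0,∞)` with its moments. -/
def StieltjesDeterminate (ν : Measure ℝ) : Prop :=
  ∀ τ : Measure ℝ, τ ∈ WSti ν → τ = ν


section AuxProofs

open scoped NNReal

lemma eval_mul_of_isHomogeneous' {σ : Type*} {P : MvPolynomial σ ℝ} {n : ℕ}
    (hP : P.IsHomogeneous n) (r : ℝ) (x : σ → ℝ) :
    eval (fun i => r * x i) P = r ^ n * eval x P := by
  rw [eval_eq, eval_eq, Finset.mul_sum]
  refine Finset.sum_congr rfl fun dd hd => ?_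
  have hdeg : (∑ i ∈ dd.support, dd i) = n := by
    by_contra hne
    exact mem_support_iff.mp hd (hP.coeff_eq_zero hne)
  calc coeff dd P * ∏ i ∈ dd.support, (r * x i) ^ dd i
      = coeff dd P * ((∏ i ∈ dd.support, r ^ dd i) * ∏ i ∈ dd.support, x i ^ dd i) := by
        simp [mul_pow, Finset.prod_mul_distrib]
    _ = r ^ n * (coeff dd P * ∏ i ∈ dd.support, x i ^ dd i) := by
        rw [Finset.prod_pow_eq_pow_sum, hdeg]; ring

lemma sInt_eq_integral_mul' {d : ℕ} (μ : SignedMeasure (E d)) (w : E d → ℝ)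
    (hwm : Measurable w) (hwi : Integrable w (volume : Measure (E d)))
    (hdens : ∀ s : Set (E d), MeasurableSet s → μ s = ∫ x in s, w x ∂(volume : Measure (E d)))
    (f : E d → ℝ) (hf : AEStronglyMeasurable f (volume : Measure (E d)))
    (hfw : Integrable (fun x => f x * w x) (volume : Measure (E d))) :
    sInt μ f = ∫ x, f x * w x ∂(volume : Measure (E d)) := by
  set vol : Measure (E d) := volume with hvol
  have hfin : ∀ u : E d → ℝ, Measurable u → Integrable u vol →
      IsFiniteMeasure (vol.withDensity fun x => ENNReal.ofReal (u x)) := by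
    intro u hum hui
    refine isFiniteMeasure_withDensity (ne_of_lt ?_)
    calc ∫⁻ a, ENNReal.ofReal (u a) ∂vol ≤ ∫⁻ a, ‖u a‖₊ ∂vol := by
          refine lintegral_mono fun a => ?_
          rw [← ENNReal.ofReal_coe_nnreal, coe_nnnorm]
          exact ENNReal.ofReal_le_ofReal (le_abs_self _)
      _ < ⊤ := hui.hasFiniteIntegral
  haveI h1 : IsFiniteMeasure (vol.withDensity fun x => ENNReal.ofReal (w x)) :=
    hfin w hwm hwi
  haveI h2 : IsFiniteMeasure (vol.withDensity fun x => ENNReal.ofReal (-w x)) :=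
    hfin (fun x => -w x) hwm.neg hwi.neg
  have hms : (vol.withDensity fun x => ENNReal.ofReal (w x)) ⟂ₘ
      (vol.withDensity fun x => ENNReal.ofReal (-w x)) := by
    refine ⟨{x | w x ≤ 0}, measurableSet_le hwm measurable_const, ?_, ?_⟩
    · rw [withDensity_apply _ (measurableSet_le hwm measurable_const)]
      have : ∀ᵐ x ∂vol, x ∈ {x | w x ≤ 0} → ENNReal.ofReal (w x) = (fun _ => (0:ℝ≥0∞)) x :=
        Filter.Eventually.of_forall fun x hx => ENNReal.ofReal_eq_zero.mpr hx
      rw [setLIntegral_congr_fun_ae (measurableSet_le hwm measurable_const) this]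
      simp
    · rw [withDensity_apply _ (measurableSet_le hwm measurable_const).compl]
      have : ∀ᵐ x ∂vol, x ∈ {x | w x ≤ 0}ᶜ → ENNReal.ofReal (-w x) = (fun _ => (0:ℝ≥0∞)) x := by
        refine Filter.Eventually.of_forall fun x hx => ENNReal.ofReal_eq_zero.mpr ?_
        simp only [Set.mem_compl_iff, Set.mem_setOf_eq, not_le] at hx
        linarith
      rw [setLIntegral_congr_fun_ae (measurableSet_le hwm measurable_const).compl this]
      simp
  set J : JordanDecomposition (E d) :=
    ⟨vol.withDensity fun x => ENNReal.ofReal (w x),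
     vol.withDensity fun x => ENNReal.ofReal (-w x), hms⟩ with hJdef
  have hJ : μ.toJordanDecomposition = J := by
    refine SignedMeasure.toJordanDecomposition_eq ?_
    ext s hs
    rw [hdens s hs]
    show _ = (J.posPart.toSignedMeasure - J.negPart.toSignedMeasure) s
    rw [Measure.toSignedMeasure_sub_apply hs]
    show _ = ((vol.withDensity fun x => ENNReal.ofReal (w x)) s).toReal -
      ((vol.withDensity fun x => ENNReal.ofReal (-w x)) s).toReal
    rw [withDensity_apply _ hs, withDensity_apply _ hs,
      integral_eq_lintegral_pos_part_sub_lintegral_neg_part (hwi.restrict (s := s))]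
  have key : ∀ u : E d → ℝ, Measurable u →
      ∫ x, f x ∂(vol.withDensity fun x => ENNReal.ofReal (u x)) =
        ∫ x, max (u x) 0 * f x ∂vol := by
    intro u hum
    simp only [ENNReal.ofReal]
    rw [integral_withDensity_eq_integral_smul hum.real_toNNReal]
    refine integral_congr_ae (Filter.Eventually.of_forall fun x => ?_)
    dsimp only
    rw [NNReal.smul_def, Real.coe_toNNReal', smul_eq_mul]
  have hint : ∀ u : E d → ℝ, Measurable u → (∀ x, |u x| ≤ |w x|) →
      Integrable (fun x => max (u x) 0 * f x) vol := by
    intro u hum hub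
    refine Integrable.mono hfw (((hum.max measurable_const).aestronglyMeasurable).mul hf) ?_
    refine Filter.Eventually.of_forall fun x => ?_
    simp only [Real.norm_eq_abs, abs_mul]
    rw [mul_comm (|f x|) (|w x|)]
    refine mul_le_mul_of_nonneg_right ?_ (abs_nonneg _)
    calc |max (u x) 0| = max (u x) 0 := abs_of_nonneg (le_max_right _ _)
      _ ≤ |u x| := max_le (le_abs_self _) (abs_nonneg _)
      _ ≤ |w x| := hub x
  rw [sInt, hJ]
  show (∫ x, f x ∂(vol.withDensity fun x => ENNReal.ofReal (w x))) -
      ∫ x, f x ∂(vol.withDensity fun x => ENNReal.ofReal (-w x)) = _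
  rw [key w hwm, key (fun x => -w x) hwm.neg,
    ← integral_sub (hint w hwm fun x => le_rfl) (hint (fun x => -w x) hwm.neg
      fun x => by rw [abs_neg])]
  refine integral_congr_ae (Filter.Eventually.of_forall fun x => ?_)
  dsimp only
  rcases le_total 0 (w x) with h | h
  · rw [max_eq_left h, max_eq_right (by linarith)]; ring
  · rw [max_eq_right h, max_eq_left (by linarith)]; ring

lemma key_polar' {d : ℕ} (hd : 1 ≤ d) (μ : SignedMeasure (E d)) (w : E d → ℝ)
    (hwm : Measurable w) (hwi : Integrable w (volume : Measure (E d)))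
    (hdens : ∀ s : Set (E d), MeasurableSet s → μ s = ∫ x in s, w x ∂(volume : Measure (E d)))
    {k : ℕ} (P : MvPolynomial (Fin d) ℝ) (hP : P.IsHomogeneous k)
    (g : ℝ → ℝ) (hg : ∀ r : ℝ, g r = ∫ θ : sphere (0 : E d) 1,
        w (r • (θ : E d)) * eval (fun i => (θ : E d) i) P ∂(sphMeas d))
    (h : ℝ → ℝ) (hc : Continuous h) (hcs : HasCompactSupport h) :
    sInt μ (fun x => h ‖x‖ * eval (fun i => x i) P) =
      ∫ r in Set.Ioi (0:ℝ), h r * (r ^ (k + d - 1) * g r) := by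
  haveI : IsFiniteMeasure (sphMeas d) := by
    unfold sphMeas; infer_instance
  haveI : Nontrivial (E d) := by
    refine Module.nontrivial_of_finrank_pos (R := ℝ) (M := E d) ?_
    rw [finrank_euclideanSpace_fin]
    omega
  haveI : NullSingletonClass (volume : Measure (E d)) := by infer_instance
  have hdim : Module.finrank ℝ (E d) = d := finrank_euclideanSpace_fin
  have hmp : MeasurePreserving (homeomorphUnitSphereProd (E d))
      ((volume : Measure (E d)).comap Subtype.val)
      ((sphMeas d).prod (.volumeIoiPow (d - 1))) := by
    have := (volume : Measure (E d)).measurePreserving_homeomorphUnitSphereProd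
    rwa [hdim] at this
  set F : sphere (0 : E d) 1 × Set.Ioi (0:ℝ) → ℝ :=
    fun p => (h ‖(p.2 : ℝ) • (p.1 : E d)‖ * eval (fun i => ((p.2 : ℝ) • (p.1 : E d)) i) P) *
      w ((p.2 : ℝ) • (p.1 : E d)) with hF
  set f : E d → ℝ := fun x => (h ‖x‖ * eval (fun i => x i) P) * w x with hf
  have hFcomp : ∀ x : ({0}ᶜ : Set (E d)), F (homeomorphUnitSphereProd (E d) x) = f x := by
    intro x
    have hx : ‖(x : E d)‖ ≠ 0 :=
      norm_ne_zero_iff.mpr (Set.mem_compl_singleton_iff.mp x.2)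
    simp only [hF, homeomorphUnitSphereProd_apply_fst_coe,
      homeomorphUnitSphereProd_apply_snd_coe, smul_smul, mul_inv_cancel₀ hx, one_smul, hf]
  have hpc : Continuous fun x : E d => eval (fun i => x i) P := by
    have h1 : Continuous fun x : E d => (fun i => x i : Fin d → ℝ) :=
      continuous_pi fun i => (EuclideanSpace.proj (𝕜 := ℝ) i).continuous
    exact (MvPolynomial.continuous_eval (p := P)).comp h1
  have hfc : Continuous fun x : E d => h ‖x‖ * eval (fun i => x i) P :=
    (hc.comp continuous_norm).mul hpc
  obtain ⟨R, hR⟩ := hcs.isBounded.subset_closedBall 0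
  have hsupp1 : HasCompactSupport fun x : E d => h ‖x‖ := by
    refine HasCompactSupport.intro (isCompact_closedBall (0 : E d) R) fun x hx => ?_
    refine image_eq_zero_of_notMem_tsupport fun hmem => hx ?_
    have h2 : ‖x‖ ≤ R := by
      have := mem_closedBall_zero_iff.mp (hR hmem)
      rwa [Real.norm_eq_abs, abs_of_nonneg (norm_nonneg _)] at this
    exact mem_closedBall_zero_iff.mpr h2
  have hb : ∃ C, ∀ x : E d, ‖h ‖x‖ * eval (fun i => x i) P‖ ≤ C :=
    (hsupp1.mul_right).exists_bound_of_continuous hfc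
  have hfi : Integrable f (volume : Measure (E d)) :=
    hwi.bdd_mul hfc.aestronglyMeasurable (ae_of_all _ hb.choose_spec)
  have hsint : sInt μ (fun x => h ‖x‖ * eval (fun i => x i) P) =
      ∫ x, f x ∂(volume : Measure (E d)) :=
    sInt_eq_integral_mul' μ w hwm hwi hdens _ hfc.aestronglyMeasurable hfi
  rw [hsint]
  have hFi : Integrable F ((sphMeas d).prod (.volumeIoiPow (d - 1))) := by
    rw [← hmp.integrable_comp_emb (Homeomorph.measurableEmbedding _)]
    have h1 : Integrable f ((volume : Measure (E d)).restrict {0}ᶜ) := hfi.restrict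
    rw [← map_comap_subtype_coe (measurableSet_singleton (0:E d)).compl] at h1
    have h2 := ((MeasurableEmbedding.subtype_coe
      (measurableSet_singleton (0:E d)).compl).integrable_map_iff).mp h1
    refine h2.congr (Filter.Eventually.of_forall fun x => ?_)
    exact (hFcomp x).symm
  have step1 : ∫ x, f x ∂(volume : Measure (E d)) =
      ∫ p, F p ∂((sphMeas d).prod (.volumeIoiPow (d - 1))) := by
    calc ∫ x, f x ∂(volume : Measure (E d))
        = ∫ x in ({0}ᶜ : Set (E d)), f x ∂(volume : Measure (E d)) := by
          rw [MeasureTheory.restrict_compl_singleton]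
      _ = ∫ x : ({0}ᶜ : Set (E d)), f x ∂(Measure.comap Subtype.val volume) :=
          (integral_subtype_comap (measurableSet_singleton 0).compl f).symm
      _ = ∫ x : ({0}ᶜ : Set (E d)), F (homeomorphUnitSphereProd (E d) x)
            ∂(Measure.comap Subtype.val volume) :=
          integral_congr_ae (Filter.Eventually.of_forall fun x => (hFcomp x).symm)
      _ = ∫ p, F p ∂((sphMeas d).prod (.volumeIoiPow (d - 1))) :=
          hmp.integral_comp (Homeomorph.measurableEmbedding _) F
  have step2 : ∫ p, F p ∂((sphMeas d).prod (.volumeIoiPow (d - 1))) =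
      ∫ r : Set.Ioi (0:ℝ), (∫ θ, F (θ, r) ∂(sphMeas d)) ∂(Measure.volumeIoiPow (d-1)) :=
    integral_prod_symm F hFi
  have step3 : ∀ r : Set.Ioi (0:ℝ), (∫ θ, F (θ, r) ∂(sphMeas d)) =
      h r * ((r:ℝ)^k * g r) := by
    intro r
    have hr : (0:ℝ) < r := r.2
    have hptw : ∀ θ : sphere (0:E d) 1, F (θ, r) =
        (h r * (r:ℝ)^k) * (w ((r:ℝ) • (θ:E d)) * eval (fun i => (θ:E d) i) P) := by
      intro θ
      have hθ : ‖(θ : E d)‖ = 1 := mem_sphere_zero_iff_norm.mp θ.2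
      have hnorm : ‖(r:ℝ) • (θ:E d)‖ = (r:ℝ) := by
        rw [norm_smul, hθ, mul_one, Real.norm_eq_abs, abs_of_pos hr]
      have heval : eval (fun i => ((r:ℝ) • (θ:E d)) i) P =
          (r:ℝ)^k * eval (fun i => (θ:E d) i) P := by
        have hsm : (fun i => ((r:ℝ) • (θ:E d)) i) = fun i => (r:ℝ) * (θ:E d) i := by
          funext i; simp [PiLp.smul_apply, smul_eq_mul]
        rw [hsm, eval_mul_of_isHomogeneous' hP]
      simp only [hF]
      rw [hnorm, heval]; ring
    rw [integral_congr_ae (Filter.Eventually.of_forall hptw), integral_const_mul, ← hg r]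
    ring
  rw [step1, step2, integral_congr_ae (Filter.Eventually.of_forall step3)]
  calc ∫ r : Set.Ioi (0:ℝ), h r * ((r:ℝ)^k * g r) ∂(Measure.volumeIoiPow (d-1))
      = ∫ r : Set.Ioi (0:ℝ), ((r:ℝ)^(d-1)).toNNReal • (h r * ((r:ℝ)^k * g r))
          ∂(Measure.comap Subtype.val volume) := by
        simp only [Measure.volumeIoiPow, ENNReal.ofReal]
        rw [integral_withDensity_eq_integral_smul
          ((measurable_subtype_coe.pow_const _).real_toNNReal)]
    _ = ∫ r in Set.Ioi (0:ℝ), (r^(d-1)).toNNReal • (h r * (r^k * g r)) ∂volume :=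
        integral_subtype_comap measurableSet_Ioi
          (fun a : ℝ => (a ^ (d-1)).toNNReal • (h a * (a^k * g a)))
    _ = ∫ r in Set.Ioi (0:ℝ), h r * (r^(k+d-1) * g r) ∂volume := by
        refine setIntegral_congr_fun measurableSet_Ioi fun r hr => ?_
        rw [NNReal.smul_def, Real.coe_toNNReal _ (pow_nonneg (le_of_lt hr) _), smul_eq_mul,
          Nat.add_sub_assoc hd, pow_add]
        ring

end AuxProofs

theorem statement18 {d : ℕ} (hd : 1 ≤ d) (B : HarmonicBasis d)
    (μ : SignedMeasure (E d)) (hmom : IsMomentMeasure μ)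
    (w : E d → ℝ) (hwm : Measurable w) (hwi : Integrable w (volume : Measure (E d)))
    (hdens : ∀ s : Set (E d), MeasurableSet s → μ s = ∫ x in s, w x ∂(volume : Measure (E d)))
    (hL2 : ∀ r : ℝ, 0 < r →
      MemLp (fun θ : sphere (0 : E d) 1 => w (r • (θ : E d))) 2 (sphMeas d))
    (wkl : (k : ℕ) → Fin (B.a k) → ℝ → ℝ)
    (hwkl : ∀ k l (r : ℝ), wkl k l r =
      ∫ θ : sphere (0 : E d) 1, w (r • (θ : E d)) * B.Yf k l (θ : E d) ∂(sphMeas d))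
    (hnonneg : ∀ k l (r : ℝ), 0 < r → 0 ≤ wkl k l r) :
    B.PseudoPositive μ ∧
    B.IsComponentFamily μ (fun k l =>
      ((volume : Measure ℝ).restrict (Set.Ioi 0)).withDensity
        (fun r => ENNReal.ofReal (r ^ (k + d - 1) * wkl k l r))) ∧
    ∀ k l, Integrable (fun r => wkl k l r * r ^ (d - 1))
        ((volume : Measure ℝ).restrict (Set.Ioi 0)) →
      (∫ r, (r ^ k)⁻¹ ∂(((volume : Measure ℝ).restrict (Set.Ioi 0)).withDensity
          (fun r => ENNReal.ofReal (r ^ (k + d - 1) * wkl k l r))))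
        = ∫ r in Set.Ioi (0 : ℝ), wkl k l r * r ^ (d - 1) := by
  have hYfc : ∀ (k : ℕ) (l : Fin (B.a k)), Continuous (B.Yf k l) := by
    intro k l
    show Continuous fun x : E d => eval (fun i => x i) (B.Y k l)
    have h1 : Continuous fun x : E d => (fun i => x i : Fin d → ℝ) :=
      continuous_pi fun i => (EuclideanSpace.proj (𝕜 := ℝ) i).continuous
    exact (MvPolynomial.continuous_eval (p := B.Y k l)).comp h1
  have hwkl_meas : ∀ (k : ℕ) (l : Fin (B.a k)), Measurable (wkl k l) := by
    intro k l
    haveI : IsFiniteMeasure (sphMeas d) := by unfold sphMeas; infer_instance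
    have hjm : StronglyMeasurable (fun q : ℝ × sphere (0:E d) 1 =>
        w (q.1 • (q.2 : E d)) * B.Yf k l (q.2 : E d)) := by
      apply Measurable.stronglyMeasurable
      refine (hwm.comp ?_).mul ?_
      · exact (continuous_fst.smul (continuous_subtype_val.comp continuous_snd)).measurable
      · exact ((hYfc k l).comp (continuous_subtype_val.comp continuous_snd)).measurable
    have heq : wkl k l = fun r => ∫ θ : sphere (0:E d) 1,
        w (r • (θ:E d)) * B.Yf k l (θ:E d) ∂(sphMeas d) := funext (hwkl k l)
    rw [heq]
    exact hjm.integral_prod_right'.measurable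
  have key : ∀ (k : ℕ) (l : Fin (B.a k)) (h : ℝ → ℝ), Continuous h → HasCompactSupport h →
      sInt μ (fun x => h ‖x‖ * B.Yf k l x) =
        ∫ r in Set.Ioi (0:ℝ), h r * (r ^ (k + d - 1) * wkl k l r) := by
    intro k l h hc hcs
    exact key_polar' hd μ w hwm hwi hdens (B.Y k l) (B.homogeneous k l)
      (wkl k l) (hwkl k l) h hc hcs
  have hdens_meas : ∀ (k : ℕ) (l : Fin (B.a k)),
      Measurable (fun r : ℝ => (r ^ (k + d - 1) * wkl k l r).toNNReal) :=
    fun k l => ((measurable_id.pow_const _).mul (hwkl_meas k l)).real_toNNReal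
  refine ⟨?_, ?_, ?_⟩
  · intro k l h hc hcs hpos
    rw [key k l h hc hcs]
    refine setIntegral_nonneg measurableSet_Ioi fun r hr => ?_
    exact mul_nonneg (hpos r) (mul_nonneg (pow_nonneg (le_of_lt hr) _) (hnonneg k l r hr))
  · intro k l
    constructor
    · rw [withDensity_apply _ measurableSet_Iio,
        Measure.restrict_restrict measurableSet_Iio, Set.Iio_inter_Ioi, Set.Ioo_self,
        Measure.restrict_empty, lintegral_zero_measure]
    · intro h hc hcs
      rw [key k l h hc hcs]
      simp only [ENNReal.ofReal]
      rw [integral_withDensity_eq_integral_smul (hdens_meas k l)]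
      refine setIntegral_congr_fun measurableSet_Ioi fun r hr => ?_
      rw [NNReal.smul_def,
        Real.coe_toNNReal _ (mul_nonneg (pow_nonneg (le_of_lt hr) _) (hnonneg k l r hr)),
        smul_eq_mul]
      ring
  · intro k l _
    simp only [ENNReal.ofReal]
    rw [integral_withDensity_eq_integral_smul (hdens_meas k l)]
    refine setIntegral_congr_fun measurableSet_Ioi fun r hr => ?_
    rw [NNReal.smul_def,
      Real.coe_toNNReal _ (mul_nonneg (pow_nonneg (le_of_lt hr) _) (hnonneg k l r hr)),
      smul_eq_mul, Nat.add_sub_assoc hd, pow_add]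
    have hrk : (r:ℝ)^k ≠ 0 := pow_ne_zero _ (ne_of_gt hr)
    field_simp
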